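/- Let A, B be self-adjoint operators on a finite-dimensional Hilbert space and ψ a unit vector. Then ΔA · ΔB ≥ (1/2)|⟨ψ, [A,B]ψ⟩|, where ΔA := √(⟨ψ, A²ψ⟩ − ⟨ψ, Aψ⟩²). Consequently, if t₁₂ = (J₁·J₂)/(j₁j₂) and t₂₃ = (J₂·J₃)/(j₂j₃) are normalized scalar product operators for mutually commuting angular momentum triples, then Δt₁₂ · Δt₂₃ ≥ |⟨ψ, J₁·(J₂×J₃)ψ⟩| / (2 j₁ j₂² j₃). -/

import Mathlib

open scoped InnerProductSpace

/-- The Levi-Civita symbol on three indices, valued in `ℂ`. -/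
def epsLC (i j k : Fin 3) : ℂ :=
  if (i, j, k) = (0, 1, 2) ∨ (i, j, k) = (1, 2, 0) ∨ (i, j, k) = (2, 0, 1) then 1
  else if (i, j, k) = (0, 2, 1) ∨ (i, j, k) = (2, 1, 0) ∨ (i, j, k) = (1, 0, 2) then -1
  else 0

/-- Root-mean-square uncertainty of an operator `A` in the state `ψ`. -/
noncomputable def uncertainty {V : Type*} [NormedAddCommGroup V] [InnerProductSpace ℂ V]
    (A : Module.End ℂ V) (ψ : V) : ℝ :=
  Real.sqrt ((⟪ψ, A (A ψ)⟫_ℂ).re - ((⟪ψ, A ψ⟫_ℂ).re) ^ 2)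

lemma expect_real {V : Type*} [NormedAddCommGroup V] [InnerProductSpace ℂ V]
    (A : Module.End ℂ V) (hA : A.IsSymmetric) (ψ : V) :
    ⟪ψ, A ψ⟫_ℂ = ((⟪ψ, A ψ⟫_ℂ).re : ℂ) := by
  have h : (starRingEnd ℂ) ⟪ψ, A ψ⟫_ℂ = ⟪ψ, A ψ⟫_ℂ := by
    rw [inner_conj_symm]; exact hA ψ ψ
  rw [Complex.conj_eq_iff_re] at h
  exact h.symm

lemma robertson {V : Type*} [NormedAddCommGroup V] [InnerProductSpace ℂ V]
    (A B : Module.End ℂ V) (hA : A.IsSymmetric) (hB : B.IsSymmetric)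
    (ψ : V) (hψ : ‖ψ‖ = 1) :
    uncertainty A ψ * uncertainty B ψ ≥
      (1 / 2) * ‖⟪ψ, (A * B - B * A) ψ⟫_ℂ‖ := by
  have hψψ : ⟪ψ, ψ⟫_ℂ = 1 := by
    rw [inner_self_eq_norm_sq_to_K, hψ]; norm_num
  obtain ⟨a, realA⟩ : ∃ a : ℝ, ⟪ψ, A ψ⟫_ℂ = (a : ℂ) := ⟨_, expect_real A hA ψ⟩
  obtain ⟨b, realB⟩ : ∃ b : ℝ, ⟪ψ, B ψ⟫_ℂ = (b : ℂ) := ⟨_, expect_real B hB ψ⟩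
  have hra : (⟪ψ, A ψ⟫_ℂ).re = a := by rw [realA]; simp
  have hrb : (⟪ψ, B ψ⟫_ℂ).re = b := by rw [realB]; simp
  set x : V := A ψ - (a : ℂ) • ψ with hx
  set y : V := B ψ - (b : ℂ) • ψ with hy
  have hax : ⟪A ψ, ψ⟫_ℂ = (a : ℂ) := by
    rw [← inner_conj_symm, realA]; simp
  have hbx : ⟪B ψ, ψ⟫_ℂ = (b : ℂ) := by
    rw [← inner_conj_symm, realB]; simp
  have hxx : (⟪x, x⟫_ℂ).re = (⟪ψ, A (A ψ)⟫_ℂ).re - a ^ 2 := by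
    have hAA : ⟪A ψ, A ψ⟫_ℂ = ⟪ψ, A (A ψ)⟫_ℂ := hA ψ (A ψ)
    rw [hx]
    simp only [inner_sub_left, inner_sub_right, inner_smul_left, inner_smul_right, hAA,
      hax, hψψ, realA, Complex.conj_ofReal]
    simp
    ring
  have hyy : (⟪y, y⟫_ℂ).re = (⟪ψ, B (B ψ)⟫_ℂ).re - b ^ 2 := by
    have hBB : ⟪B ψ, B ψ⟫_ℂ = ⟪ψ, B (B ψ)⟫_ℂ := hB ψ (B ψ)
    rw [hy]
    simp only [inner_sub_left, inner_sub_right, inner_smul_left, inner_smul_right, hBB,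
      hbx, hψψ, realB, Complex.conj_ofReal]
    simp
    ring
  have hux : uncertainty A ψ = ‖x‖ := by
    rw [uncertainty, hra, ← hxx, @norm_eq_sqrt_re_inner ℂ]
    simp [RCLike.re_to_complex]
  have huy : uncertainty B ψ = ‖y‖ := by
    rw [uncertainty, hrb, ← hyy, @norm_eq_sqrt_re_inner ℂ]
    simp [RCLike.re_to_complex]
  have hcomm : ⟪ψ, (A * B - B * A) ψ⟫_ℂ = ⟪x, y⟫_ℂ - ⟪y, x⟫_ℂ := by
    simp only [LinearMap.sub_apply, inner_sub_right, Module.End.mul_apply]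
    rw [← hA ψ (B ψ), ← hB ψ (A ψ), hx, hy]
    simp only [inner_sub_left, inner_sub_right, inner_smul_left, inner_smul_right, hax, hbx,
      hψψ, realA, realB, Complex.conj_ofReal]
    ring
  have hyx : ⟪y, x⟫_ℂ = (starRingEnd ℂ) ⟪x, y⟫_ℂ := (inner_conj_symm y x).symm
  have habs : ‖⟪x, y⟫_ℂ - ⟪y, x⟫_ℂ‖ ≤ 2 * (‖x‖ * ‖y‖) := by
    rw [hyx]
    have h1 : ‖⟪x, y⟫_ℂ - (starRingEnd ℂ) ⟪x, y⟫_ℂ‖ ≤ 2 * ‖⟪x, y⟫_ℂ‖ := by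
      calc ‖⟪x, y⟫_ℂ - (starRingEnd ℂ) ⟪x, y⟫_ℂ‖
          ≤ ‖⟪x, y⟫_ℂ‖ + ‖(starRingEnd ℂ) ⟪x, y⟫_ℂ‖ := by
            exact norm_sub_le _ _
        _ = 2 * ‖⟪x, y⟫_ℂ‖ := by rw [Complex.norm_conj]; ring
    refine h1.trans ?_
    have h2 := norm_inner_le_norm (𝕜 := ℂ) x y
    nlinarith
  rw [hux, huy, hcomm, ge_iff_le]
  nlinarith

lemma isSymmetric_sum {V : Type*} [NormedAddCommGroup V] [InnerProductSpace ℂ V]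
    {ι : Type*} (s : Finset ι) (T : ι → Module.End ℂ V)
    (h : ∀ i ∈ s, (T i).IsSymmetric) : (∑ i ∈ s, T i).IsSymmetric := by
  intro x y
  simp only [LinearMap.coe_sum, Finset.sum_apply, sum_inner, inner_sum]
  exact Finset.sum_congr rfl fun i hi => h i hi x y

lemma comm_scalar {V : Type*} [AddCommGroup V] [Module ℂ V]
    (J₁ J₂ J₃ : Fin 3 → Module.End ℂ V)
    (hsu2 : ∀ i j, J₂ i * J₂ j - J₂ j * J₂ i = Complex.I • ∑ k, epsLC i j k • J₂ k)
    (hc12 : ∀ i j, J₁ i * J₂ j = J₂ j * J₁ i)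
    (hc13 : ∀ i j, J₁ i * J₃ j = J₃ j * J₁ i)
    (hc23 : ∀ i j, J₂ i * J₃ j = J₃ j * J₂ i) :
    (∑ i, J₁ i * J₂ i) * (∑ i, J₂ i * J₃ i) - (∑ i, J₂ i * J₃ i) * (∑ i, J₁ i * J₂ i)
      = (-Complex.I) • ∑ k, J₁ k * (∑ i, ∑ j, epsLC k i j • (J₂ i * J₃ j)) := by
  have key : ∀ i j, (J₁ i * J₂ i) * (J₂ j * J₃ j) - (J₂ j * J₃ j) * (J₁ i * J₂ i)
      = Complex.I • ∑ k, epsLC i j k • (J₁ i * (J₂ k * J₃ j)) := by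
    intro i j
    have h1 : J₂ j * J₃ j * (J₁ i * J₂ i) = J₁ i * (J₂ j * J₂ i) * J₃ j := by
      calc J₂ j * J₃ j * (J₁ i * J₂ i)
          = J₂ j * (J₃ j * J₁ i) * J₂ i := by noncomm_ring
        _ = J₂ j * (J₁ i * J₃ j) * J₂ i := by rw [← hc13 i j]
        _ = (J₂ j * J₁ i) * (J₃ j * J₂ i) := by noncomm_ring
        _ = (J₁ i * J₂ j) * (J₂ i * J₃ j) := by rw [← hc12 i j, ← hc23 i j]
        _ = J₁ i * (J₂ j * J₂ i) * J₃ j := by noncomm_ring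
    have h2 : (J₁ i * J₂ i) * (J₂ j * J₃ j) = J₁ i * (J₂ i * J₂ j) * J₃ j := by noncomm_ring
    have h3 : J₁ i * (J₂ i * J₂ j) * J₃ j - J₁ i * (J₂ j * J₂ i) * J₃ j
        = J₁ i * ((J₂ i * J₂ j - J₂ j * J₂ i) * J₃ j) := by noncomm_ring
    rw [h2, h1, h3, hsu2 i j]
    simp only [Finset.sum_mul, Finset.mul_sum, smul_mul_assoc, mul_smul_comm, Finset.smul_sum]
  rw [Finset.sum_mul_sum, Finset.sum_mul_sum]
  rw [Finset.sum_comm (s := Finset.univ) (t := Finset.univ)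
    (f := fun i j => (J₂ i * J₃ i) * (J₁ j * J₂ j))]
  rw [← Finset.sum_sub_distrib]
  simp only [← Finset.sum_sub_distrib, key]
  simp only [Finset.mul_sum, mul_smul_comm, Finset.smul_sum]
  simp only [Fin.sum_univ_three]
  simp [epsLC, Prod.ext_iff]
  module

theorem uncertainty_relation_and_scalar_product_bound
    {V : Type*} [NormedAddCommGroup V] [InnerProductSpace ℂ V] [FiniteDimensional ℂ V]
    (A B : Module.End ℂ V) (hA : A.IsSymmetric) (hB : B.IsSymmetric)
    (ψ : V) (hψ : ‖ψ‖ = 1)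
    (J₁ J₂ J₃ : Fin 3 → Module.End ℂ V)
    (hJsym : ∀ i, (J₁ i).IsSymmetric ∧ (J₂ i).IsSymmetric ∧ (J₃ i).IsSymmetric)
    (hsu1 : ∀ i j, J₁ i * J₁ j - J₁ j * J₁ i = Complex.I • ∑ k, epsLC i j k • J₁ k)
    (hsu2 : ∀ i j, J₂ i * J₂ j - J₂ j * J₂ i = Complex.I • ∑ k, epsLC i j k • J₂ k)
    (hsu3 : ∀ i j, J₃ i * J₃ j - J₃ j * J₃ i = Complex.I • ∑ k, epsLC i j k • J₃ k)
    (hc12 : ∀ i j, J₁ i * J₂ j = J₂ j * J₁ i)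
    (hc13 : ∀ i j, J₁ i * J₃ j = J₃ j * J₁ i)
    (hc23 : ∀ i j, J₂ i * J₃ j = J₃ j * J₂ i)
    (j₁ j₂ j₃ : ℝ) (hj₁ : 0 < j₁) (hj₂ : 0 < j₂) (hj₃ : 0 < j₃)
    (hCas1 : ∑ i, J₁ i * J₁ i = ((j₁ * (j₁ + 1) : ℝ) : ℂ) • (1 : Module.End ℂ V))
    (hCas2 : ∑ i, J₂ i * J₂ i = ((j₂ * (j₂ + 1) : ℝ) : ℂ) • (1 : Module.End ℂ V))
    (hCas3 : ∑ i, J₃ i * J₃ i = ((j₃ * (j₃ + 1) : ℝ) : ℂ) • (1 : Module.End ℂ V)) :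
    uncertainty A ψ * uncertainty B ψ ≥
        (1 / 2) * ‖⟪ψ, (A * B - B * A) ψ⟫_ℂ‖ ∧
      uncertainty (((1 / (j₁ * j₂) : ℝ) : ℂ) • ∑ i, J₁ i * J₂ i) ψ *
          uncertainty (((1 / (j₂ * j₃) : ℝ) : ℂ) • ∑ i, J₂ i * J₃ i) ψ ≥
        ‖⟪ψ, ((∑ k, J₁ k * (∑ i, ∑ j, epsLC k i j • (J₂ i * J₃ j))) ψ)⟫_ℂ‖ /
          (2 * j₁ * j₂ ^ 2 * j₃) := by
  constructor
  · exact robertson A B hA hB ψ hψ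
  · set c₁ : ℝ := 1 / (j₁ * j₂) with hc₁
    set c₂ : ℝ := 1 / (j₂ * j₃) with hc₂
    set S12 : Module.End ℂ V := ∑ i, J₁ i * J₂ i with hS12
    set S23 : Module.End ℂ V := ∑ i, J₂ i * J₃ i with hS23
    set C : Module.End ℂ V := ∑ k, J₁ k * (∑ i, ∑ j, epsLC k i j • (J₂ i * J₃ j)) with hC
    have hS12sym : S12.IsSymmetric :=
      isSymmetric_sum _ _ fun i _ =>
        ((hJsym i).1).mul_of_commute ((hJsym i).2.1) (hc12 i i)
    have hS23sym : S23.IsSymmetric :=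
      isSymmetric_sum _ _ fun i _ =>
        ((hJsym i).2.1).mul_of_commute ((hJsym i).2.2) (hc23 i i)
    have hAsym : (((c₁ : ℂ)) • S12).IsSymmetric :=
      hS12sym.smul (by simp [Complex.conj_ofReal])
    have hBsym : (((c₂ : ℂ)) • S23).IsSymmetric :=
      hS23sym.smul (by simp [Complex.conj_ofReal])
    have hrob := robertson ((c₁ : ℂ) • S12) ((c₂ : ℂ) • S23) hAsym hBsym ψ hψ
    have hmul : ((c₁ : ℂ) • S12) * ((c₂ : ℂ) • S23) - ((c₂ : ℂ) • S23) * ((c₁ : ℂ) • S12)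
        = (((c₁ * c₂ : ℝ) : ℂ) * (-Complex.I)) • C := by
      have : ((c₁ : ℂ) • S12) * ((c₂ : ℂ) • S23) - ((c₂ : ℂ) • S23) * ((c₁ : ℂ) • S12)
          = ((c₁ : ℂ) * (c₂ : ℂ)) • (S12 * S23 - S23 * S12) := by
        simp only [smul_mul_assoc, mul_smul_comm, smul_smul, smul_sub]
        ring_nf
      rw [this, comm_scalar J₁ J₂ J₃ hsu2 hc12 hc13 hc23, smul_smul]
      push_cast
      ring_nf
      rfl
    have habs : ‖⟪ψ, (((c₁ : ℂ) • S12) * ((c₂ : ℂ) • S23)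
          - ((c₂ : ℂ) • S23) * ((c₁ : ℂ) • S12)) ψ⟫_ℂ‖
        = (c₁ * c₂) * ‖⟪ψ, C ψ⟫_ℂ‖ := by
      rw [hmul]
      rw [LinearMap.smul_apply, inner_smul_right, norm_mul]
      have hc₁pos : 0 < c₁ := by positivity
      have hc₂pos : 0 < c₂ := by positivity
      rw [norm_mul, Complex.norm_real, Real.norm_eq_abs, norm_neg, Complex.norm_I]
      rw [abs_of_pos (by positivity)]
      ring
    rw [habs] at hrob
    refine le_trans (le_of_eq ?_) hrob
    rw [hc₁, hc₂]
    have h1 : (j₁ : ℝ) ≠ 0 := ne_of_gt hj₁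
    have h2 : (j₂ : ℝ) ≠ 0 := ne_of_gt hj₂
    have h3 : (j₃ : ℝ) ≠ 0 := ne_of_gt hj₃
    rw [div_eq_iff (by positivity : (2 * j₁ * j₂ ^ 2 * j₃ : ℝ) ≠ 0)]
    field_simp
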